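/- Composition of a projection with a hypothesis test (key step in the proof of the main theorem): Let ε ∈ (0,1]. Let κ be a density matrix and τ, ω positive semidefinite matrices of the same size, let Π̃ be an orthogonal projection and Π' a matrix with 0 ≼ Π' ≼ 1, all of the same size, such that: Tr(Π̃ κ) ≥ 1 − ε⁴/4, Π̃ ω Π̃ ≼ 2τ, and Tr(Π' κ) ≥ 1 − ε⁴/4. Then the operator Π := Π̃ Π' Π̃ satisfies 0 ≼ Π ≼ 1, Tr(Π κ) ≥ 1 − ε², and Tr(Π ω) ≤ 2 · Tr(Π' τ). -/

import Mathlib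

open Matrix
open scoped ComplexOrder Classical
open scoped MatrixOrder

/-- A density matrix: a positive semidefinite matrix of trace 1. -/
def IsDensityMatrix {n : Type*} [Fintype n] (ρ : Matrix n n ℂ) : Prop :=
  ρ.PosSemidef ∧ ρ.trace = 1

section Aux

variable {n : Type*} [Fintype n] [DecidableEq n]

/-- Frobenius-style embedding of matrices into Euclidean space. -/
noncomputable def euMat (M : Matrix n n ℂ) : EuclideanSpace ℂ (n × n) :=
  (WithLp.equiv 2 ((n × n) → ℂ)).symm fun p => M p.1 p.2

lemma euMat_add (M N : Matrix n n ℂ) : euMat (M + N) = euMat M + euMat N := by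
  ext p
  simp [euMat, Matrix.add_apply]

lemma trace_mul_conjTranspose_re (M : Matrix n n ℂ) :
    ((M * Mᴴ).trace).re = ‖euMat M‖ ^ 2 := by
  have h1 : ‖euMat M‖ ^ 2 = ∑ p : n × n, ‖M p.1 p.2‖ ^ 2 := by
    rw [EuclideanSpace.norm_eq]
    rw [Real.sq_sqrt (by positivity)]
    rfl
  have h2 : ∀ z : ℂ, (z * star z).re = ‖z‖ ^ 2 := by
    intro z
    rw [RCLike.star_def, Complex.mul_conj]
    simp [Complex.sq_norm]
  rw [h1, Matrix.trace]
  simp only [Matrix.diag, Matrix.mul_apply, Matrix.conjTranspose_apply]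
  rw [Complex.re_sum, Fintype.sum_prod_type]
  refine Finset.sum_congr rfl fun i _ => ?_
  rw [Complex.re_sum]
  exact Finset.sum_congr rfl fun j _ => h2 _

lemma trace_mul_conjTranspose_re_nonneg (M : Matrix n n ℂ) :
    0 ≤ ((M * Mᴴ).trace).re := by
  rw [trace_mul_conjTranspose_re]; positivity

lemma trace_mul_re_nonneg {X Y : Matrix n n ℂ} (hX : X.PosSemidef) (hY : Y.PosSemidef) :
    0 ≤ ((X * Y).trace).re := by
  have hXH : (CFC.sqrt X)ᴴ = CFC.sqrt X := (Matrix.nonneg_iff_posSemidef.mp (CFC.sqrt_nonneg X)).1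
  have hYH : (CFC.sqrt Y)ᴴ = CFC.sqrt Y := (Matrix.nonneg_iff_posSemidef.mp (CFC.sqrt_nonneg Y)).1
  have key : (X * Y).trace = ((CFC.sqrt X * CFC.sqrt Y) * (CFC.sqrt X * CFC.sqrt Y)ᴴ).trace := by
    conv_lhs => rw [← CFC.sqrt_mul_sqrt_self X hX.nonneg, ← CFC.sqrt_mul_sqrt_self Y hY.nonneg]
    rw [show CFC.sqrt X * CFC.sqrt X * (CFC.sqrt Y * CFC.sqrt Y)
        = CFC.sqrt X * (CFC.sqrt X * CFC.sqrt Y * CFC.sqrt Y) by noncomm_ring]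
    rw [Matrix.trace_mul_comm]
    congr 1
    simp only [Matrix.conjTranspose_mul, hXH, hYH]
    noncomm_ring
  rw [key]
  exact trace_mul_conjTranspose_re_nonneg _

lemma real_arith (ε u v w : ℝ) (hε0 : 0 < ε) (hε1 : ε ≤ 1)
    (hu0 : 0 ≤ u) (hv0 : 0 ≤ v) (hw0 : 0 ≤ w)
    (hb : 1 - ε ^ 4 / 4 ≤ v ^ 2) (hb1 : v ^ 2 ≤ 1)
    (hwc : w ^ 2 ≤ ε ^ 4 / 4) (htri : v ≤ u + w) :
    1 - ε ^ 2 ≤ u ^ 2 := by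
  have hε2 : 0 < ε ^ 2 := by positivity
  have hε41 : ε ^ 4 ≤ 1 := pow_le_one₀ hε0.le hε1
  have hv1 : v ≤ 1 := by nlinarith
  have hwhalf : w ≤ ε ^ 2 / 2 := by
    nlinarith [sq_nonneg (w - ε ^ 2 / 2), sq_nonneg (w + ε ^ 2 / 2)]
  have hvw : w ≤ v := by nlinarith
  have huvw : v - w ≤ u := by linarith
  have hsq : (v - w) ^ 2 ≤ u ^ 2 := by nlinarith
  nlinarith [mul_nonneg (sub_nonneg.2 hv1) hw0,
    mul_nonneg (sub_nonneg.2 hwhalf) (by nlinarith : (0 : ℝ) ≤ 2 - ε ^ 2 / 2 - w)]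

end Aux

/-- Composition of a projection with a hypothesis test: if `Tr(Π̃ κ) ≥ 1 − ε⁴/4`,
`Π̃ ω Π̃ ≼ 2τ` and `Tr(Π' κ) ≥ 1 − ε⁴/4`, then `Π := Π̃ Π' Π̃` is a measurement operator
with `Tr(Π κ) ≥ 1 − ε²` and `Tr(Π ω) ≤ 2 · Tr(Π' τ)`. -/
theorem projection_compose_hypothesis_test {n : Type*} [Fintype n] [DecidableEq n]
    (ε : ℝ) (hε0 : 0 < ε) (hε1 : ε ≤ 1)
    (κ τ ω Pt P' : Matrix n n ℂ)
    (hκ : IsDensityMatrix κ) (hτ : τ.PosSemidef) (hω : ω.PosSemidef)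
    (hPt : Pt.IsHermitian) (hPtproj : Pt * Pt = Pt)
    (hP'0 : P'.PosSemidef) (hP'1 : ((1 : Matrix n n ℂ) - P').PosSemidef)
    (h1 : 1 - ε ^ 4 / 4 ≤ ((Pt * κ).trace).re)
    (h2 : ((2 : ℂ) • τ - Pt * ω * Pt).PosSemidef)
    (h3 : 1 - ε ^ 4 / 4 ≤ ((P' * κ).trace).re) :
    (Pt * P' * Pt).PosSemidef ∧
    ((1 : Matrix n n ℂ) - Pt * P' * Pt).PosSemidef ∧
    1 - ε ^ 2 ≤ (((Pt * P' * Pt) * κ).trace).re ∧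
    (((Pt * P' * Pt) * ω).trace).re ≤ 2 * ((P' * τ).trace).re := by
  obtain ⟨hκpsd, hκtr⟩ := hκ
  have hPtH : Ptᴴ = Pt := hPt
  -- Part 1
  have part1 : (Pt * P' * Pt).PosSemidef := by
    have h := hP'0.mul_mul_conjTranspose_same Pt
    rwa [hPtH] at h
  -- the complementary projection C = 1 - Pt
  set C : Matrix n n ℂ := 1 - Pt with hCdef
  have hCH : Cᴴ = C := by simp [hCdef, hPtH]
  have hCC : C * C = C := by
    have h : C * C = 1 - Pt - Pt + Pt * Pt := by rw [hCdef]; noncomm_ring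
    rw [h, hPtproj, hCdef]; abel
  have hCpsd : C.PosSemidef := by
    have h := Matrix.posSemidef_conjTranspose_mul_self C
    rwa [hCH, hCC] at h
  -- Part 2
  have part2 : ((1 : Matrix n n ℂ) - Pt * P' * Pt).PosSemidef := by
    have h4 : (Pt * (1 - P') * Pt).PosSemidef := by
      have h := hP'1.mul_mul_conjTranspose_same Pt
      rwa [hPtH] at h
    have heq : (1 : Matrix n n ℂ) - Pt * P' * Pt = C + Pt * (1 - P') * Pt := by
      have h5 : Pt * (1 - P') * Pt = Pt * Pt - Pt * P' * Pt := by noncomm_ring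
      rw [h5, hPtproj, hCdef]; abel
    rw [heq]; exact hCpsd.add h4
  -- square roots
  set S : Matrix n n ℂ := CFC.sqrt κ with hSdef
  have hSS : S * S = κ := CFC.sqrt_mul_sqrt_self κ hκpsd.nonneg
  have hSH : Sᴴ = S := (Matrix.nonneg_iff_posSemidef.mp (CFC.sqrt_nonneg κ)).1
  set R : Matrix n n ℂ := CFC.sqrt P' with hRdef
  have hRR : R * R = P' := CFC.sqrt_mul_sqrt_self P' hP'0.nonneg
  have hRH : Rᴴ = R := (Matrix.nonneg_iff_posSemidef.mp (CFC.sqrt_nonneg P')).1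
  -- the three Frobenius vectors
  set X : Matrix n n ℂ := R * Pt * S with hXdef
  set Y : Matrix n n ℂ := R * S with hYdef
  set Z : Matrix n n ℂ := R * C * S with hZdef
  have hYXZ : Y = X + Z := by
    have h : X + Z = R * (Pt + C) * S := by rw [hXdef, hZdef]; noncomm_ring
    have h2' : Pt + C = 1 := by rw [hCdef]; abel
    rw [h, h2', Matrix.mul_one]
  -- trace identities
  have trX : ((Pt * P' * Pt) * κ).trace = (X * Xᴴ).trace := by
    have hXH : Xᴴ = S * Pt * R := by
      simp [hXdef, Matrix.conjTranspose_mul, hSH, hPtH, hRH, mul_assoc]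
    have e1 : (X * Xᴴ).trace = (P' * (Pt * κ * Pt)).trace := by
      rw [hXH, show X * (S * Pt * R) = R * (Pt * (S * S) * Pt) * R by rw [hXdef]; noncomm_ring,
        hSS, Matrix.trace_mul_cycle, hRR]
    have e2 : ((Pt * P' * Pt) * κ).trace = (P' * (Pt * κ * Pt)).trace := by
      rw [show (Pt * P' * Pt) * κ = Pt * P' * (Pt * κ) by noncomm_ring,
        Matrix.trace_mul_cycle, show Pt * κ * Pt * P' = (Pt * κ * Pt) * P' by noncomm_ring,
        Matrix.trace_mul_comm]
    rw [e2, e1]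
  have trY : ((P' * κ).trace) = (Y * Yᴴ).trace := by
    have hYH : Yᴴ = S * R := by simp [hYdef, Matrix.conjTranspose_mul, hSH, hRH]
    rw [hYH, show Y * (S * R) = R * (S * S) * R by rw [hYdef]; noncomm_ring, hSS,
      Matrix.trace_mul_cycle, hRR]
  have trZ : ((P' * (C * κ * C)).trace) = (Z * Zᴴ).trace := by
    have hZH : Zᴴ = S * C * R := by
      simp [hZdef, Matrix.conjTranspose_mul, hSH, hCH, hRH, mul_assoc]
    rw [hZH, show Z * (S * C * R) = R * (C * (S * S) * C) * R by rw [hZdef]; noncomm_ring,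
      hSS, Matrix.trace_mul_cycle, hRR]
  -- real quantities
  set b : ℝ := ((P' * κ).trace).re with hbdef
  set u : ℝ := ‖euMat X‖ with hudef
  set v : ℝ := ‖euMat Y‖ with hvdef
  set w : ℝ := ‖euMat Z‖ with hwdef
  have hu2 : (((Pt * P' * Pt) * κ).trace).re = u ^ 2 := by
    rw [trX, trace_mul_conjTranspose_re]
  have hv2 : b = v ^ 2 := by rw [hbdef, trY, trace_mul_conjTranspose_re]
  have hw2 : ((P' * (C * κ * C)).trace).re = w ^ 2 := by
    rw [trZ, trace_mul_conjTranspose_re]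
  -- κ trace 1
  have hκre : (κ.trace).re = 1 := by rw [hκtr]; simp
  -- b ≤ 1
  have hb1 : b ≤ 1 := by
    have h := trace_mul_re_nonneg hP'1 hκpsd
    rw [Matrix.sub_mul, Matrix.one_mul, Matrix.trace_sub, Complex.sub_re, hκre] at h
    linarith
  -- c = Tr(Cκ).re, and c ≤ ε⁴/4, 0 ≤ c
  set c : ℝ := ((C * κ).trace).re with hcdef
  have hcval : c = 1 - ((Pt * κ).trace).re := by
    rw [hcdef, hCdef, Matrix.sub_mul, Matrix.one_mul, Matrix.trace_sub, Complex.sub_re, hκre]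
  have hc0 : 0 ≤ c := trace_mul_re_nonneg hCpsd hκpsd
  have hcδ : c ≤ ε ^ 4 / 4 := by rw [hcval]; linarith
  -- w² ≤ c
  have hCκC : (C * κ * C).PosSemidef := by
    have h := hκpsd.mul_mul_conjTranspose_same C
    rwa [hCH] at h
  have hwc : w ^ 2 ≤ c := by
    rw [← hw2]
    have h := trace_mul_re_nonneg hP'1 hCκC
    rw [Matrix.sub_mul, Matrix.one_mul, Matrix.trace_sub, Complex.sub_re] at h
    have htr : ((C * κ * C).trace).re = c := by
      rw [Matrix.trace_mul_comm, show C * (C * κ) = (C * C) * κ by noncomm_ring, hCC, hcdef]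
    linarith
  -- norm triangle inequality
  have htri : v ≤ u + w := by
    rw [hvdef, hudef, hwdef, hYXZ, euMat_add]
    exact norm_add_le _ _
  have hu0 : 0 ≤ u := norm_nonneg _
  have hv0 : 0 ≤ v := norm_nonneg _
  have hw0 : 0 ≤ w := norm_nonneg _
  -- Part 3 real arithmetic
  have part3 : 1 - ε ^ 2 ≤ (((Pt * P' * Pt) * κ).trace).re := by
    rw [hu2]
    refine real_arith ε u v w hε0 hε1 hu0 hv0 hw0 ?_ ?_ ?_ htri
    · rw [← hv2]; exact h3
    · rw [← hv2]; exact hb1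
    · linarith
  -- Part 4
  have part4 : (((Pt * P' * Pt) * ω).trace).re ≤ 2 * ((P' * τ).trace).re := by
    have h := trace_mul_re_nonneg hP'0 h2
    rw [Matrix.mul_sub, Matrix.trace_sub, Complex.sub_re] at h
    have ht1 : ((P' * ((2 : ℂ) • τ)).trace).re = 2 * ((P' * τ).trace).re := by
      rw [Matrix.mul_smul, Matrix.trace_smul]
      simp [Complex.smul_re]
    have ht2 : ((P' * (Pt * ω * Pt)).trace).re = (((Pt * P' * Pt) * ω).trace).re := by
      rw [show P' * (Pt * ω * Pt) = (P' * Pt * ω) * Pt by noncomm_ring, Matrix.trace_mul_comm,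
        show Pt * (P' * Pt * ω) = (Pt * P' * Pt) * ω by noncomm_ring]
    rw [ht1, ht2] at h
    linarith
  exact ⟨part1, part2, part3, part4⟩
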